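/- Let L be a complete atomistic ortholattice and define, on the set A(L) of atoms of L, p ⊥ q iff p ≤ qᶜ. Then (A(L),⊥) is a point-closed orthoset, and the map ω sending a ∈ L to {p ∈ A(L) : p ≤ a} is an order isomorphism from L onto the collection of orthoclosed subsets of A(L) ordered by inclusion, satisfying ω(aᶜ) = ω(a)^⊥ for all a ∈ L. Conversely, if (X,⊥) is a point-closed orthoset, then the orthoclosed subsets of X, ordered by inclusion and with the operation A ↦ A^⊥, form a complete atomistic ortholattice whose atoms are exactly the singletons {e}, e ∈ X. -/
import Mathlib


/-- The orthocomplement of a subset of an orthoset. -/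
def pperp {X : Type*} (perp : X → X → Prop) (A : Set X) : Set X :=
  {q | ∀ p ∈ A, perp q p}

theorem stmt_9
    -- Part 1 data: a complete atomistic ortholattice L
    {L : Type*} [CompleteLattice L] (oc : L → L)
    (hanti : ∀ a b : L, a ≤ b → oc b ≤ oc a)
    (hinv : ∀ a : L, oc (oc a) = a)
    (hbot : ∀ a : L, a ⊓ oc a = ⊥)
    (htop : ∀ a : L, a ⊔ oc a = ⊤)
    (hatomistic : ∀ a : L, a = sSup {p : L | IsAtom p ∧ p ≤ a})
    -- Part 2 data: a point-closed orthoset (X, perp)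
    {X : Type*} [Nonempty X] (perp : X → X → Prop)
    (hsymm : ∀ x y : X, perp x y → perp y x)
    (hirr : ∀ x : X, ¬ perp x x)
    (hpc : ∀ e : X, pperp perp (pperp perp {e}) = {e}) :
    -- Part 1: the atom space of L is a point-closed orthoset and ω is an
    -- isomorphism onto the ortholattice of orthoclosed subsets of A(L).
    (let A := {p : L // IsAtom p}
     let perpA : A → A → Prop := fun p q => p.1 ≤ oc q.1
     let ω : L → Set A := fun a => {p : A | p.1 ≤ a}
     (∀ p q : A, perpA p q → perpA q p) ∧
     (∀ p : A, ¬ perpA p p) ∧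
     (∀ p : A, pperp perpA (pperp perpA {p}) = {p}) ∧
     (∀ a b : L, a ≤ b ↔ ω a ⊆ ω b) ∧
     (∀ a : L, pperp perpA (pperp perpA (ω a)) = ω a) ∧
     (∀ A' : Set A, pperp perpA (pperp perpA A') = A' → ∃ a : L, ω a = A') ∧
     (∀ a : L, ω (oc a) = pperp perpA (ω a))) ∧
    -- Part 2: the orthoclosed subsets of X form a complete atomistic
    -- ortholattice whose atoms are the singletons.
    (let OC : Set X → Prop := fun A => pperp perp (pperp perp A) = A
     OC ∅ ∧ OC Set.univ ∧
     (∀ 𝒜 : Set (Set X), (∀ A ∈ 𝒜, OC A) → OC (⋂₀ 𝒜)) ∧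
     (∀ A : Set X, OC A → OC (pperp perp A)) ∧
     (∀ A : Set X, OC A → A ∩ pperp perp A = ∅) ∧
     (∀ A : Set X, OC A →
       pperp perp (pperp perp (A ∪ pperp perp A)) = Set.univ) ∧
     (∀ A B : Set X, A ⊆ B → pperp perp B ⊆ pperp perp A) ∧
     (∀ A : Set X, OC A →
       pperp perp (pperp perp (⋃ e ∈ A, ({e} : Set X))) = A) ∧
     (∀ A : Set X, OC A →
       ((A ≠ ∅ ∧ ∀ B : Set X, OC B → B ⊆ A → B = ∅ ∨ B = A) ↔
         ∃ e : X, A = {e}))) := by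
  -- abbreviations for part 1
  set AT := {p : L // IsAtom p} with hAT
  have hgal : ∀ a b : L, a ≤ oc b ↔ b ≤ oc a := by
    intro a b
    constructor
    · intro h
      have := hanti _ _ h
      rwa [hinv] at this
    · intro h
      have := hanti _ _ h
      rwa [hinv] at this
  let P : AT → AT → Prop := fun p q => p.1 ≤ oc q.1
  let W : L → Set AT := fun a => {p : AT | p.1 ≤ a}
  have hPsymm : ∀ p q : AT, P p q → P q p := fun p q h => (hgal p.1 q.1).mp h
  have hPirr : ∀ p : AT, ¬ P p p := by
    intro p h
    have h1 : p.1 ⊓ oc p.1 = p.1 := inf_eq_left.mpr h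
    have h2 : p.1 = ⊥ := by rw [← h1, hbot]
    exact p.2.1 h2
  have hperpW : ∀ a : L, pperp P (W a) = W (oc a) := by
    intro a
    ext q
    constructor
    · intro h
      have hs : sSup {p : L | IsAtom p ∧ p ≤ a} ≤ oc q.1 :=
        sSup_le fun p hp => (hgal q.1 p).mp (h ⟨p, hp.1⟩ hp.2)
      rw [← hatomistic a] at hs
      exact (hgal a q.1).mp hs
    · intro h p hp
      exact le_trans h (hanti _ _ hp)
  have hWdc : ∀ a : L, pperp P (pperp P (W a)) = W a := by
    intro a
    rw [hperpW, hperpW, hinv]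
  have hWmono : ∀ a b : L, a ≤ b ↔ W a ⊆ W b := by
    intro a b
    constructor
    · intro h p hp
      exact le_trans hp h
    · intro h
      rw [hatomistic a]
      exact sSup_le fun p hp => h (show (⟨p, hp.1⟩ : AT) ∈ W a from hp.2)
  have hWatom : ∀ p : AT, W p.1 = {p} := by
    intro p
    ext q
    simp only [W, Set.mem_setOf_eq, Set.mem_singleton_iff]
    constructor
    · intro h
      apply Subtype.ext
      by_contra hne
      exact q.2.1 (p.2.2 q.1 (lt_of_le_of_ne h (fun he => hne he)))
    · intro h
      rw [h]
  have hsurjW : ∀ A' : Set AT, pperp P (pperp P A') = A' → ∃ a : L, W a = A' := by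
    intro A' hA'
    refine ⟨sSup (Subtype.val '' A'), ?_⟩
    set a := sSup (Subtype.val '' A') with ha
    have h1 : pperp P A' = W (oc a) := by
      ext q
      constructor
      · intro h
        have hs : a ≤ oc q.1 := sSup_le (by
          rintro x ⟨p, hp, rfl⟩
          exact (hgal q.1 p.1).mp (h p hp))
        exact (hgal a q.1).mp hs
      · intro h p hp
        have hpa : p.1 ≤ a := le_sSup ⟨p, hp, rfl⟩
        exact le_trans h (hanti _ _ hpa)
    have : pperp P (pperp P A') = W a := by
      rw [h1, hperpW, hinv]
    rw [← this, hA']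
  have part1 : (∀ p q : AT, P p q → P q p) ∧
      (∀ p : AT, ¬ P p p) ∧
      (∀ p : AT, pperp P (pperp P {p}) = {p}) ∧
      (∀ a b : L, a ≤ b ↔ W a ⊆ W b) ∧
      (∀ a : L, pperp P (pperp P (W a)) = W a) ∧
      (∀ A' : Set AT, pperp P (pperp P A') = A' → ∃ a : L, W a = A') ∧
      (∀ a : L, W (oc a) = pperp P (W a)) := by
    refine ⟨hPsymm, hPirr, ?_, hWmono, hWdc, hsurjW, fun a => (hperpW a).symm⟩
    intro p
    rw [← hWatom p, hWdc]
  -- part 2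
  have hsub : ∀ A : Set X, A ⊆ pperp perp (pperp perp A) :=
    fun A p hp q hq => hsymm _ _ (hq p hp)
  have hanti2 : ∀ A B : Set X, A ⊆ B → pperp perp B ⊆ pperp perp A :=
    fun A B h q hq p hp => hq p (h hp)
  have hpe : pperp perp (∅ : Set X) = Set.univ := by
    ext q; simp [pperp]
  have hpu : pperp perp (Set.univ : Set X) = ∅ := by
    ext q
    simp only [pperp, Set.mem_setOf_eq, Set.mem_empty_iff_false, iff_false]
    intro h
    exact hirr q (h q (Set.mem_univ q))
  have hOCe : pperp perp (pperp perp (∅ : Set X)) = ∅ := by rw [hpe, hpu]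
  have hOCu : pperp perp (pperp perp (Set.univ : Set X)) = Set.univ := by
    rw [hpu, hpe]
  have part2 : pperp perp (pperp perp (∅ : Set X)) = ∅ ∧
      pperp perp (pperp perp (Set.univ : Set X)) = Set.univ ∧
      (∀ 𝒜 : Set (Set X), (∀ A ∈ 𝒜, pperp perp (pperp perp A) = A) →
        pperp perp (pperp perp (⋂₀ 𝒜)) = ⋂₀ 𝒜) ∧
      (∀ A : Set X, pperp perp (pperp perp A) = A →
        pperp perp (pperp perp (pperp perp A)) = pperp perp A) ∧
      (∀ A : Set X, pperp perp (pperp perp A) = A → A ∩ pperp perp A = ∅) ∧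
      (∀ A : Set X, pperp perp (pperp perp A) = A →
        pperp perp (pperp perp (A ∪ pperp perp A)) = Set.univ) ∧
      (∀ A B : Set X, A ⊆ B → pperp perp B ⊆ pperp perp A) ∧
      (∀ A : Set X, pperp perp (pperp perp A) = A →
        pperp perp (pperp perp (⋃ e ∈ A, ({e} : Set X))) = A) ∧
      (∀ A : Set X, pperp perp (pperp perp A) = A →
        ((A ≠ ∅ ∧ ∀ B : Set X, pperp perp (pperp perp B) = B → B ⊆ A →
          B = ∅ ∨ B = A) ↔ ∃ e : X, A = {e})) := by
    refine ⟨hOCe, hOCu, ?_, ?_, ?_, ?_, hanti2, ?_, ?_⟩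
    · intro 𝒜 h𝒜
      refine subset_antisymm ?_ (hsub _)
      intro x hx
      rw [Set.mem_sInter]
      intro A hA
      rw [← h𝒜 A hA]
      exact hanti2 _ _ (hanti2 _ _ (Set.sInter_subset_of_mem hA)) hx
    · intro A _
      exact subset_antisymm (hanti2 _ _ (hsub A)) (hsub _)
    · intro A _
      ext q
      simp only [Set.mem_inter_iff, Set.mem_empty_iff_false, iff_false, not_and]
      intro hqA hq
      exact hirr q (hq q hqA)
    · intro A _
      have h0 : pperp perp (A ∪ pperp perp A) = ∅ := by
        ext q
        simp only [Set.mem_empty_iff_false, iff_false]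
        intro h
        have hq : q ∈ pperp perp A := fun p hp => h p (Or.inl hp)
        exact hirr q (h q (Or.inr hq))
      rw [h0, hpe]
    · intro A hA
      have : (⋃ e ∈ A, ({e} : Set X)) = A := by simp
      rw [this]; exact hA
    · intro A hA
      constructor
      · rintro ⟨hne, hmin⟩
        obtain ⟨e, he⟩ := Set.nonempty_iff_ne_empty.mpr hne
        have hsubA : ({e} : Set X) ⊆ A := by
          rw [← hpc e, ← hA]
          exact hanti2 _ _ (hanti2 _ _ (Set.singleton_subset_iff.mpr he))
        rcases hmin {e} (hpc e) hsubA with h | h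
        · exact absurd h (Set.singleton_ne_empty e)
        · exact ⟨e, h.symm⟩
      · rintro ⟨e, rfl⟩
        refine ⟨Set.singleton_ne_empty e, ?_⟩
        intro B _ hB
        rcases Set.eq_empty_or_nonempty B with h | ⟨x, hx⟩
        · exact Or.inl h
        · right
          have hxe : x = e := hB hx
          apply subset_antisymm hB
          rw [← hxe]
          exact Set.singleton_subset_iff.mpr hx
  exact ⟨part1, part2⟩
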